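/- Let G=(V,E) be a connected graph and T ⊆ V of even cardinality. Let J₁,…,J_k be spanning trees of G and λ₁,…,λ_k ≥ 0 with ∑_i λ_i = 1, and set x* = ∑_i λ_i·χ(J_i). For each i let D_i be the wrong-degree set of J_i with respect to T. Then for every T-odd set U ⊆ V, the total weight of trees whose wrong-degree set meets U in an odd number of nodes satisfies ∑_{i : |D_i ∩ U| odd} λ_i ≤ x*(δ(U)) − 1. -/

import Mathlib

open Finset
open scoped Classical

variable {V : Type*}

/-- `x(δ(U))`: the total `x`-value of the edges of `G` with exactly one endpoint in `U`. -/
noncomputable def xCut [Fintype V] [DecidableEq V] (G : SimpleGraph V)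
    (x : Sym2 V → ℝ) (U : Finset V) : ℝ :=
  ∑ u ∈ U, ∑ w ∈ Uᶜ, if G.Adj u w then x s(u, w) else 0

/-- The degree of a vertex `v` in a simple graph `J`. -/
noncomputable def treeDeg (J : SimpleGraph V) (v : V) : ℕ :=
  Nat.card {w // J.Adj v w}

private lemma cross_of_walk {J : SimpleGraph V} {U : Finset V} :
    ∀ {u w : V}, J.Walk u w → u ∈ U → w ∉ U → ∃ a b, a ∈ U ∧ b ∉ U ∧ J.Adj a b := by
  intro u w p
  induction p with
  | nil => intro h h'; exact absurd h h'
  | @cons a b c hab p ih =>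
    intro ha hc
    by_cases hb : b ∈ U
    · exact ih hb hc
    · exact ⟨a, b, ha, hb, hab⟩

private lemma even_cast_zmod2 {n : ℕ} (h : Even n) : (n : ZMod 2) = 0 := by
  rw [ZMod.natCast_eq_zero_iff]
  exact h.two_dvd

private lemma odd_cast_zmod2 {n : ℕ} (h : Odd n) : (n : ZMod 2) = 1 := by
  obtain ⟨m, rfl⟩ := h
  push_cast
  have h2 : (2 : ZMod 2) = 0 := by decide
  rw [h2]; ring

private lemma treeDeg_eq_sum [Fintype V] (J : SimpleGraph V) (v : V) :
    treeDeg J v = ∑ w, if J.Adj v w then 1 else 0 := by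
  rw [treeDeg, Nat.card_eq_fintype_card, Fintype.card_subtype, Finset.sum_boole, Nat.cast_id]

theorem stmt12 {V : Type*} [Fintype V] [DecidableEq V]
    (G : SimpleGraph V) (hG : G.Connected)
    (T : Finset V) (hTeven : Even T.card)
    (k : ℕ) (J : Fin k → SimpleGraph V)
    (hJG : ∀ i, J i ≤ G) (hJtree : ∀ i, (J i).IsTree)
    (lam : Fin k → ℝ) (hlam0 : ∀ i, 0 ≤ lam i) (hlam1 : ∑ i, lam i = 1)
    (x : Sym2 V → ℝ)
    (hx : ∀ e ∈ G.edgeSet,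
      x e = ∑ i, lam i * (if e ∈ (J i).edgeSet then 1 else 0))
    (D : Fin k → Finset V)
    (hD : ∀ i v, v ∈ D i ↔
      ((v ∈ T ∧ Even (treeDeg (J i) v)) ∨ (v ∉ T ∧ Odd (treeDeg (J i) v))))
    (U : Finset V) (hU : Odd ((U ∩ T).card)) :
    ∑ i ∈ univ.filter (fun i => Odd ((U ∩ D i).card)), lam i ≤ xCut G x U - 1 := by
  -- the number of edges of `J i` crossing the cut `U`
  set c : Fin k → ℕ := fun i => ∑ u ∈ U, ∑ w ∈ Uᶜ, if (J i).Adj u w then 1 else 0 with hc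
  -- Step 1: xCut as a convex combination of cut sizes
  have hxcut : xCut G x U = ∑ i, lam i * (c i : ℝ) := by
    have key : ∀ u w : V, (if G.Adj u w then x s(u, w) else 0)
        = ∑ i, lam i * (if (J i).Adj u w then 1 else 0) := by
      intro u w
      by_cases h : G.Adj u w
      · rw [if_pos h, hx _ (by exact h)]
        refine Finset.sum_congr rfl fun i _ => ?_
        simp [SimpleGraph.mem_edgeSet]
      · rw [if_neg h]
        refine (Finset.sum_eq_zero fun i _ => ?_).symm
        have hni : ¬ (J i).Adj u w := fun h' => h (hJG i h')
        simp [hni]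
    calc xCut G x U = ∑ u ∈ U, ∑ w ∈ Uᶜ, ∑ i, lam i * (if (J i).Adj u w then 1 else 0) := by
          unfold xCut; exact Finset.sum_congr rfl fun u _ =>
            Finset.sum_congr rfl fun w _ => key u w
      _ = ∑ u ∈ U, ∑ i, ∑ w ∈ Uᶜ, lam i * (if (J i).Adj u w then 1 else 0) :=
          Finset.sum_congr rfl fun u _ => Finset.sum_comm
      _ = ∑ i, ∑ u ∈ U, ∑ w ∈ Uᶜ, lam i * (if (J i).Adj u w then 1 else 0) :=
          Finset.sum_comm
      _ = ∑ i, lam i * (c i : ℝ) := by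
          refine Finset.sum_congr rfl fun i _ => ?_
          rw [hc]
          push_cast
          rw [Finset.mul_sum]
          refine Finset.sum_congr rfl fun u _ => ?_
          rw [Finset.mul_sum]
  -- nonemptiness facts
  have hUne : ∃ u, u ∈ U := by
    have h1 : 0 < (U ∩ T).card := hU.pos
    obtain ⟨u, hu⟩ := Finset.card_pos.mp h1
    exact ⟨u, (Finset.mem_inter.mp hu).1⟩
  have hUcne : ∃ w, w ∉ U := by
    by_contra h
    push_neg at h
    have hUT : U ∩ T = T := Finset.inter_eq_right.mpr fun t _ => h t
    rw [hUT] at hU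
    exact (Nat.not_even_iff_odd.mpr hU) hTeven
  obtain ⟨u₀, hu₀⟩ := hUne
  obtain ⟨w₀, hw₀⟩ := hUcne
  -- Step 2: each cut has at least one edge
  have hc1 : ∀ i, 1 ≤ c i := by
    intro i
    obtain ⟨p⟩ := (hJtree i).isConnected.preconnected u₀ w₀
    obtain ⟨a, b, ha, hb, hab⟩ := cross_of_walk p hu₀ hw₀
    have h1 : (1 : ℕ) ≤ ∑ w ∈ Uᶜ, if (J i).Adj a w then 1 else 0 := by
      have := Finset.single_le_sum (f := fun w => if (J i).Adj a w then (1 : ℕ) else 0)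
        (fun _ _ => by positivity) (Finset.mem_compl.mpr hb)
      simpa [hab] using this
    calc (1 : ℕ) ≤ ∑ w ∈ Uᶜ, if (J i).Adj a w then 1 else 0 := h1
      _ ≤ c i := Finset.single_le_sum
          (f := fun u => ∑ w ∈ Uᶜ, if (J i).Adj u w then (1:ℕ) else 0)
          (fun _ _ => by positivity) ha
  -- Parity: (c i : ZMod 2) = |U∩T| + |U∩D i|
  have hpar : ∀ i, (c i : ZMod 2) = ((U ∩ T).card : ZMod 2) + ((U ∩ D i).card : ZMod 2) := by
    intro i
    -- degree of v mod 2
    have hdeg : ∀ v : V, ((treeDeg (J i) v : ZMod 2))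
        = (if v ∈ T then 1 else 0) + (if v ∈ D i then 1 else 0) := by
      intro v
      by_cases hT : v ∈ T <;> by_cases hDv : v ∈ D i
      · -- v ∈ T, v ∈ D i : Even deg
        have he : Even (treeDeg (J i) v) := by
          rcases (hD i v).mp hDv with ⟨_, h⟩ | ⟨h, _⟩
          · exact h
          · exact absurd hT h
        rw [even_cast_zmod2 he]; simp [hT, hDv]; decide
      · -- v ∈ T, v ∉ D i : Odd deg
        have ho : Odd (treeDeg (J i) v) := by
          rw [← Nat.not_even_iff_odd]
          intro he
          exact hDv ((hD i v).mpr (Or.inl ⟨hT, he⟩))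
        rw [odd_cast_zmod2 ho]; simp [hT, hDv]
      · -- v ∉ T, v ∈ D i : Odd deg
        have ho : Odd (treeDeg (J i) v) := by
          rcases (hD i v).mp hDv with ⟨h, _⟩ | ⟨_, h⟩
          · exact absurd h hT
          · exact h
        rw [odd_cast_zmod2 ho]; simp [hT, hDv]
      · -- v ∉ T, v ∉ D i : Even deg
        have he : Even (treeDeg (J i) v) := by
          rw [← Nat.not_odd_iff_even]
          intro ho
          exact hDv ((hD i v).mpr (Or.inr ⟨hT, ho⟩))
        rw [even_cast_zmod2 he]; simp [hT, hDv]
    -- inner symmetric sum vanishes mod 2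
    have hin : (∑ u ∈ U, ∑ w ∈ U, if (J i).Adj u w then (1 : ZMod 2) else 0) = 0 := by
      rw [← Finset.sum_product']
      refine Finset.sum_involution (fun p _ => (p.2, p.1)) ?_ ?_ ?_ ?_
      · intro p _
        have hsym : (J i).Adj p.1 p.2 ↔ (J i).Adj p.2 p.1 := ⟨fun h => h.symm, fun h => h.symm⟩
        by_cases h : (J i).Adj p.1 p.2
        · simp only [if_pos h, if_pos (hsym.mp h)]
          decide
        · have h' : ¬ (J i).Adj p.2 p.1 := fun hh => h (hsym.mpr hh)
          simp [h, h']
      · intro p hp hf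
        intro hgp
        have : p.2 = p.1 := congrArg Prod.fst hgp
        apply hf
        have : ¬ (J i).Adj p.1 p.2 := by rw [← this]; exact (J i).loopless.irrefl p.2
        simp [this]
      · intro p hp
        rw [Finset.mem_product] at hp ⊢
        exact ⟨hp.2, hp.1⟩
      · intro p _; rfl
    -- compute (c i : ZMod 2)
    have hcast : (c i : ZMod 2) = ∑ u ∈ U, ∑ w ∈ Uᶜ, if (J i).Adj u w then (1 : ZMod 2) else 0 := by
      rw [hc]; push_cast; rfl
    have hsplit : ∀ u : V, (∑ w ∈ Uᶜ, if (J i).Adj u w then (1 : ZMod 2) else 0)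
        = (treeDeg (J i) u : ZMod 2) + ∑ w ∈ U, if (J i).Adj u w then (1 : ZMod 2) else 0 := by
      intro u
      have h1 := Finset.sum_add_sum_compl U (fun w => if (J i).Adj u w then (1 : ZMod 2) else 0)
      have h2 : ((treeDeg (J i) u : ℕ) : ZMod 2) = ∑ w, if (J i).Adj u w then (1 : ZMod 2) else 0 := by
        rw [treeDeg_eq_sum]; push_cast; rfl
      rw [h2, ← h1]
      exact ((by decide : ∀ a b : ZMod 2, a + b + a = b) _ _).symm
    rw [hcast]
    calc (∑ u ∈ U, ∑ w ∈ Uᶜ, if (J i).Adj u w then (1 : ZMod 2) else 0)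
        = ∑ u ∈ U, ((treeDeg (J i) u : ZMod 2)
            + ∑ w ∈ U, if (J i).Adj u w then (1 : ZMod 2) else 0) :=
          Finset.sum_congr rfl fun u _ => hsplit u
      _ = (∑ u ∈ U, (treeDeg (J i) u : ZMod 2))
            + ∑ u ∈ U, ∑ w ∈ U, if (J i).Adj u w then (1 : ZMod 2) else 0 :=
          Finset.sum_add_distrib
      _ = ∑ u ∈ U, (treeDeg (J i) u : ZMod 2) := by rw [hin, add_zero]
      _ = ∑ u ∈ U, ((if u ∈ T then (1 : ZMod 2) else 0) + (if u ∈ D i then 1 else 0)) :=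
          Finset.sum_congr rfl fun u _ => hdeg u
      _ = (∑ u ∈ U, if u ∈ T then (1 : ZMod 2) else 0)
            + ∑ u ∈ U, if u ∈ D i then (1 : ZMod 2) else 0 := Finset.sum_add_distrib
      _ = ((U ∩ T).card : ZMod 2) + ((U ∩ D i).card : ZMod 2) := by
          rw [Finset.sum_boole, Finset.sum_boole, Finset.filter_mem_eq_inter,
            Finset.filter_mem_eq_inter]
  -- Step 3: cuts with odd intersection have at least two edges
  have hc2 : ∀ i, Odd ((U ∩ D i).card) → 2 ≤ c i := by
    intro i hOdd
    have h0 : (c i : ZMod 2) = 0 := by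
      rw [hpar i, odd_cast_zmod2 hU, odd_cast_zmod2 hOdd]; decide
    have hdvd : 2 ∣ c i := by
      rwa [ZMod.natCast_eq_zero_iff] at h0
    have := hc1 i
    omega
  -- Step 4: conclusion
  have hfinal : ∑ i ∈ univ.filter (fun i => Odd ((U ∩ D i).card)), lam i
      ≤ ∑ i, lam i * ((c i : ℝ) - 1) := by
    refine le_trans (Finset.sum_le_sum ?_) (Finset.sum_le_sum_of_subset_of_nonneg
      (Finset.filter_subset _ _) ?_)
    · intro i hi
      rw [Finset.mem_filter] at hi
      have h2 : (2 : ℝ) ≤ (c i : ℝ) := by exact_mod_cast hc2 i hi.2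
      nlinarith [hlam0 i]
    · intro i _ _
      have h1 : (1 : ℝ) ≤ (c i : ℝ) := by exact_mod_cast hc1 i
      nlinarith [hlam0 i]
  calc ∑ i ∈ univ.filter (fun i => Odd ((U ∩ D i).card)), lam i
      ≤ ∑ i, lam i * ((c i : ℝ) - 1) := hfinal
    _ = (∑ i, lam i * (c i : ℝ)) - ∑ i, lam i := by
        rw [← Finset.sum_sub_distrib]
        exact Finset.sum_congr rfl fun i _ => by ring
    _ = xCut G x U - 1 := by rw [← hxcut, hlam1]
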